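/- Let p₀ and p₁ be the distributions on {0,1}² defined by: p₀ assigns probability (1-2δ)/4 to (0,0), (1+2δ)/4 to (0,1), 1/2 to (1,0), 0 to (1,1); and p₁ assigns (1+2δ)/4 to (0,0), (1-2δ)/4 to (0,1), 1/2 to (1,0), 0 to (1,1), where δ ∈ (0, 1/4). Then KL(p₀ ‖ p₁) = δ log(1 + 4δ/(1-2δ)) ≤ 4δ²/(1-2δ) ≤ 8δ². -/

import Mathlib

open BigOperators Real

/-- KL divergence between the two hard instances `p₀, p₁` on `{0,1}²`
(with labels encoded as `Bool × Bool`): it equals `δ log(1 + 4δ/(1-2δ))` and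
is at most `4δ²/(1-2δ) ≤ 8δ²`, for `δ ∈ (0, 1/4)`.  The KL divergence uses
the convention `0 · log(0/0) = 0`. -/
theorem stmt13 (δ : ℝ) (hδ0 : 0 < δ) (hδ1 : δ < 1 / 4)
    (p₀ p₁ : Bool × Bool → ℝ)
    (hp₀ : p₀ = fun z => if z = (false, false) then (1 - 2 * δ) / 4
      else if z = (false, true) then (1 + 2 * δ) / 4
      else if z = (true, false) then 1 / 2 else 0)
    (hp₁ : p₁ = fun z => if z = (false, false) then (1 + 2 * δ) / 4
      else if z = (false, true) then (1 - 2 * δ) / 4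
      else if z = (true, false) then 1 / 2 else 0)
    (KL : ℝ)
    (hKL : KL = ∑ z : Bool × Bool,
      if p₀ z = 0 then 0 else p₀ z * Real.log (p₀ z / p₁ z)) :
    KL = δ * Real.log (1 + 4 * δ / (1 - 2 * δ)) ∧
    KL ≤ 4 * δ ^ 2 / (1 - 2 * δ) ∧
    KL ≤ 8 * δ ^ 2 := by
  have h1 : (0:ℝ) < 1 - 2 * δ := by linarith
  have h2 : (0:ℝ) < 1 + 2 * δ := by linarith
  have e1 : (1 - 2 * δ) / 4 ≠ 0 := by positivity
  have e2 : (1 + 2 * δ) / 4 ≠ 0 := by positivity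
  have harg : 1 + 4 * δ / (1 - 2 * δ) = (1 + 2 * δ) / (1 - 2 * δ) := by
    field_simp
    linear_combination (-1:ℝ) * mul_inv_cancel₀ h1.ne'
  have key : KL = δ * Real.log ((1 + 2 * δ) / (1 - 2 * δ)) := by
    subst hp₀ hp₁ hKL
    rw [Fintype.sum_prod_type, Fintype.sum_bool, Fintype.sum_bool,
      Fintype.sum_bool]
    norm_num [e1, e2]
    have d1 : (1 + 2 * δ) / 4 / ((1 - 2 * δ) / 4) = (1 + 2 * δ) / (1 - 2 * δ) := by
      rw [div_div_div_cancel_right₀] ; norm_num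
    have d2 : (1 - 2 * δ) / 4 / ((1 + 2 * δ) / 4) = (1 - 2 * δ) / (1 + 2 * δ) := by
      rw [div_div_div_cancel_right₀] ; norm_num
    rw [d1, d2, Real.log_div h2.ne' h1.ne', Real.log_div h1.ne' h2.ne']
    ring
  have hlog : Real.log ((1 + 2 * δ) / (1 - 2 * δ)) ≤ 4 * δ / (1 - 2 * δ) := by
    have := Real.log_le_sub_one_of_pos (x := (1 + 2 * δ) / (1 - 2 * δ))
      (by positivity)
    have e : (1 + 2 * δ) / (1 - 2 * δ) - 1 = 4 * δ / (1 - 2 * δ) := by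
      field_simp; ring
    linarith [e ▸ this]
  have b1 : KL ≤ 4 * δ ^ 2 / (1 - 2 * δ) := by
    rw [key]
    calc δ * Real.log ((1 + 2 * δ) / (1 - 2 * δ))
        ≤ δ * (4 * δ / (1 - 2 * δ)) := by
          exact mul_le_mul_of_nonneg_left hlog hδ0.le
      _ = 4 * δ ^ 2 / (1 - 2 * δ) := by ring
  refine ⟨by rw [key, harg], b1, ?_⟩
  have : 4 * δ ^ 2 / (1 - 2 * δ) ≤ 8 * δ ^ 2 := by
    rw [div_le_iff₀ h1]
    nlinarith
  linarith
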